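/- CPO-style cost upper bound: for any two policies π, π' and any cost function C with discounted cost return J_C, J_C(π') − J_C(π) ≤ (1/(1−γ)) · E_{s∼d^π, a∼π'}[ A_C^π(s,a) + (2γ ε_C^{π'}/(1−γ)) · D_TV(π'‖π)[s] ], where A_C^π is the cost-advantage of π and ε_C^{π'} = max_s |E_{a∼π'}[A_C^π(s,a)]|. -/

import Mathlib

open scoped BigOperators

/-- CPO-style cost upper bound (Corollary 2 of Achiam et al.). -/
theorem cpo_cost_upper_bound
    {S A : Type*} [Fintype S] [Fintype A] [Nonempty S]
    (γ : ℝ) (hγ0 : 0 ≤ γ) (hγ1 : γ < 1)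
    (P : S → A → S → ℝ) (hPnn : ∀ s a s', 0 ≤ P s a s')
    (hP1 : ∀ s a, ∑ s', P s a s' = 1)
    (C : S → A → ℝ) (ρ : S → ℝ) (hρnn : ∀ s, 0 ≤ ρ s) (hρ1 : ∑ s, ρ s = 1)
    (π π' : S → A → ℝ)
    (hπnn : ∀ s a, 0 ≤ π s a) (hπ1 : ∀ s, ∑ a, π s a = 1)
    (hπ'nn : ∀ s a, 0 ≤ π' s a) (hπ'1 : ∀ s, ∑ a, π' s a = 1)
    (VC VC' : S → ℝ)
    (hVC : ∀ s, VC s = ∑ a, π s a * (C s a + γ * ∑ s', P s a s' * VC s'))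
    (hVC' : ∀ s, VC' s = ∑ a, π' s a * (C s a + γ * ∑ s', P s a s' * VC' s'))
    (AdvC : S → A → ℝ)
    (hAC : ∀ s a, AdvC s a = (C s a + γ * ∑ s', P s a s' * VC s') - VC s)
    (dvis : S → ℝ)
    (hd : ∀ s, dvis s = (1 - γ) * ρ s + γ * ∑ s'', ∑ a, dvis s'' * π s'' a * P s'' a s)
    (JC JC' : ℝ) (hJC : JC = ∑ s, ρ s * VC s) (hJC' : JC' = ∑ s, ρ s * VC' s)
    (εC : ℝ) (hεC : εC = ⨆ s, |∑ a, π' s a * AdvC s a|) :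
    JC' - JC ≤ (1 / (1 - γ)) * ∑ s, dvis s *
      ((∑ a, π' s a * AdvC s a)
        + (2 * γ * εC / (1 - γ)) * ((1 / 2) * ∑ a, |π' s a - π s a|)) := by
  classical
  have h1γ : (0:ℝ) < 1 - γ := by linarith
  set δ : S → ℝ := fun s => ∑ a, π' s a * AdvC s a with hδ
  set f : S → ℝ := fun s => VC' s - VC s with hf
  set q : S → S → ℝ := fun s'' s => ∑ a, π s'' a * P s'' a s with hq
  have hqnn : ∀ s'' s, 0 ≤ q s'' s := fun s'' s =>
    Finset.sum_nonneg fun a _ => mul_nonneg (hπnn _ _) (hPnn _ _ _)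
  have hq1 : ∀ s'', ∑ s, q s'' s = 1 := by
    intro s''
    simp only [hq]
    rw [Finset.sum_comm]
    simp [← Finset.mul_sum, hP1, hπ1]
  have hd' : ∀ s, dvis s = (1 - γ) * ρ s + γ * ∑ s'', dvis s'' * q s'' s := by
    intro s
    rw [hd s]
    congr 2
    refine Finset.sum_congr rfl fun s'' _ => ?_
    rw [Finset.mul_sum]
    exact Finset.sum_congr rfl fun a _ => by ring
  -- Step A: dvis is nonnegative
  have hdnn : ∀ s, 0 ≤ dvis s := by
    set N : S → ℝ := fun s => max (-(dvis s)) 0 with hNdef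
    have hNnn : ∀ s, 0 ≤ N s := fun s => le_max_right _ _
    have hNle : ∀ s, N s ≤ γ * ∑ s'', N s'' * q s'' s := by
      intro s
      have hpos : 0 ≤ γ * ∑ s'', N s'' * q s'' s :=
        mul_nonneg hγ0 (Finset.sum_nonneg fun s'' _ => mul_nonneg (hNnn s'') (hqnn _ _))
      refine max_le ?_ hpos
      have h1 : 0 ≤ (1 - γ) * ρ s := mul_nonneg (le_of_lt h1γ) (hρnn s)
      have h2 : ∑ s'', (-(dvis s'')) * q s'' s ≤ ∑ s'', N s'' * q s'' s :=
        Finset.sum_le_sum fun s'' _ => mul_le_mul_of_nonneg_right (le_max_left _ _) (hqnn _ _)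
      have h3 : ∑ s'', (-(dvis s'')) * q s'' s = -(∑ s'', dvis s'' * q s'' s) := by
        rw [← Finset.sum_neg_distrib]
        exact Finset.sum_congr rfl fun s'' _ => by ring
      have h4 := mul_le_mul_of_nonneg_left h2 hγ0
      rw [h3] at h4
      have := hd' s
      nlinarith
    have hsum : ∑ s, N s ≤ γ * ∑ s, N s := by
      calc ∑ s, N s ≤ ∑ s, γ * ∑ s'', N s'' * q s'' s := Finset.sum_le_sum fun s _ => hNle s
        _ = γ * ∑ s, ∑ s'', N s'' * q s'' s := by rw [← Finset.mul_sum]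
        _ = γ * ∑ s'', ∑ s, N s'' * q s'' s := by rw [Finset.sum_comm]
        _ = γ * ∑ s'', N s'' * ∑ s, q s'' s := by
            congr 1; exact Finset.sum_congr rfl fun s'' _ => (Finset.mul_sum _ _ _).symm
        _ = γ * ∑ s, N s := by
            congr 1; exact Finset.sum_congr rfl fun s'' _ => by rw [hq1 s'', mul_one]
    have hsum0 : ∑ s, N s ≤ 0 := by nlinarith
    have hN0 : ∀ s, N s = 0 := by
      intro s
      have hnn := Finset.sum_nonneg (fun s (_ : s ∈ Finset.univ) => hNnn s)
      have heq : ∑ s, N s = 0 := le_antisymm hsum0 hnn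
      exact (Finset.sum_eq_zero_iff_of_nonneg (fun s _ => hNnn s)).mp heq s (Finset.mem_univ s)
    intro s
    by_contra h
    push_neg at h
    have hpos : 0 < -(dvis s) := by linarith
    have := hN0 s
    simp only [hNdef] at this
    rw [max_eq_left (le_of_lt hpos)] at this
    linarith
  -- Step B: Bellman equation for f
  have hδ' : ∀ s, δ s = (∑ a, π' s a * (C s a + γ * ∑ s', P s a s' * VC s')) - VC s := by
    intro s
    simp only [hδ]
    rw [show (∑ a, π' s a * AdvC s a) = ∑ a, (π' s a * (C s a + γ * ∑ s', P s a s' * VC s') - π' s a * VC s) from Finset.sum_congr rfl fun a _ => by rw [hAC s a]; ring]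
    rw [Finset.sum_sub_distrib, ← Finset.sum_mul, hπ'1 s, one_mul]
  have hfB : ∀ s, f s = δ s + γ * ∑ a, π' s a * ∑ s', P s a s' * f s' := by
    intro s
    have hsub : ∀ a, ∑ s', P s a s' * f s'
        = (∑ s', P s a s' * VC' s') - ∑ s', P s a s' * VC s' := by
      intro a
      rw [← Finset.sum_sub_distrib]
      exact Finset.sum_congr rfl fun s' _ => by simp only [hf]; ring
    have hsum : ∑ a, π' s a * ∑ s', P s a s' * f s'
        = (∑ a, π' s a * ∑ s', P s a s' * VC' s') - ∑ a, π' s a * ∑ s', P s a s' * VC s' := by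
      rw [← Finset.sum_sub_distrib]
      exact Finset.sum_congr rfl fun a _ => by rw [hsub a]; ring
    have expand : ∀ (V : S → ℝ), ∑ a, π' s a * (C s a + γ * ∑ s', P s a s' * V s')
        = (∑ a, π' s a * C s a) + γ * ∑ a, π' s a * ∑ s', P s a s' * V s' := by
      intro V
      rw [show (∑ a, π' s a * (C s a + γ * ∑ s', P s a s' * V s'))
          = ∑ a, (π' s a * C s a + γ * (π' s a * ∑ s', P s a s' * V s'))
          from Finset.sum_congr rfl fun a _ => by ring]
      rw [Finset.sum_add_distrib, ← Finset.mul_sum]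
    show VC' s - VC s = _
    rw [hVC' s, hδ' s, hsum, expand VC, expand VC']
    ring
  -- Step C: sup-norm bound on f
  have hεge : ∀ s, |δ s| ≤ εC := by
    intro s
    rw [hεC]
    exact le_ciSup (f := fun s => |∑ a, π' s a * AdvC s a|)
      (Set.Finite.bddAbove (Set.finite_range _)) s
  obtain ⟨s₀, _, hs₀⟩ := Finset.exists_max_image (Finset.univ : Finset S) (fun s => |f s|)
    ⟨Classical.arbitrary S, Finset.mem_univ _⟩
  set M : ℝ := |f s₀| with hM
  have hMnn : 0 ≤ M := abs_nonneg _
  have hMle : ∀ s, |f s| ≤ M := fun s => hs₀ s (Finset.mem_univ s)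
  have hPfM : ∀ s a, |∑ s', P s a s' * f s'| ≤ M := by
    intro s a
    calc |∑ s', P s a s' * f s'| ≤ ∑ s', |P s a s' * f s'| := Finset.abs_sum_le_sum_abs _ _
      _ ≤ ∑ s', P s a s' * M := Finset.sum_le_sum fun s' _ => by
          rw [abs_mul, abs_of_nonneg (hPnn s a s')]
          exact mul_le_mul_of_nonneg_left (hMle s') (hPnn s a s')
      _ = M := by rw [← Finset.sum_mul, hP1 s a, one_mul]
  have hMbound : M ≤ εC / (1 - γ) := by
    have hb : M ≤ εC + γ * M := by
      calc M = |δ s₀ + γ * ∑ a, π' s₀ a * ∑ s', P s₀ a s' * f s'| := by rw [hM, hfB s₀]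
        _ ≤ |δ s₀| + |γ * ∑ a, π' s₀ a * ∑ s', P s₀ a s' * f s'| := abs_add_le _ _
        _ ≤ εC + γ * M := by
            refine add_le_add (hεge s₀) ?_
            rw [abs_mul, abs_of_nonneg hγ0]
            refine mul_le_mul_of_nonneg_left ?_ hγ0
            calc |∑ a, π' s₀ a * ∑ s', P s₀ a s' * f s'|
                ≤ ∑ a, |π' s₀ a * ∑ s', P s₀ a s' * f s'| := Finset.abs_sum_le_sum_abs _ _
              _ ≤ ∑ a, π' s₀ a * M := Finset.sum_le_sum fun a _ => by
                  rw [abs_mul, abs_of_nonneg (hπ'nn s₀ a)]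
                  exact mul_le_mul_of_nonneg_left (hPfM s₀ a) (hπ'nn s₀ a)
              _ = M := by rw [← Finset.sum_mul, hπ'1 s₀, one_mul]
    rw [le_div_iff₀ h1γ]
    nlinarith
  -- Step D: key identity
  set u : S → ℝ := fun s => δ s + γ * ∑ a, (π' s a - π s a) * ∑ s', P s a s' * f s' with hu
  have hfu : ∀ s, γ * ∑ a, π s a * ∑ s', P s a s' * f s' = f s - u s := by
    intro s
    rw [hfB s]
    simp only [hu]
    rw [show (∑ a, (π' s a - π s a) * ∑ s', P s a s' * f s') =
      ∑ a, (π' s a * ∑ s', P s a s' * f s' - π s a * ∑ s', P s a s' * f s') from Finset.sum_congr rfl fun a _ => by ring]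
    rw [Finset.sum_sub_distrib]
    ring
  have hkey : (1 - γ) * ∑ s, ρ s * f s = ∑ s, dvis s * u s := by
    have e1 : ∑ s, dvis s * f s
        = (1 - γ) * ∑ s, ρ s * f s + γ * ∑ s'', dvis s'' * ∑ s, q s'' s * f s := by
      calc ∑ s, dvis s * f s
          = ∑ s, ((1 - γ) * (ρ s * f s) + γ * ∑ s'', dvis s'' * (q s'' s * f s)) := by
            refine Finset.sum_congr rfl fun s _ => ?_
            rw [hd' s, add_mul, mul_assoc γ, Finset.sum_mul]
            rw [show (∑ s'', dvis s'' * q s'' s * f s) = ∑ s'', dvis s'' * (q s'' s * f s) from Finset.sum_congr rfl fun s'' _ => by ring]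
            ring
        _ = (1 - γ) * ∑ s, ρ s * f s + γ * ∑ s, ∑ s'', dvis s'' * (q s'' s * f s) := by
            rw [Finset.sum_add_distrib, ← Finset.mul_sum, ← Finset.mul_sum]
        _ = (1 - γ) * ∑ s, ρ s * f s + γ * ∑ s'', dvis s'' * ∑ s, q s'' s * f s := by
            rw [Finset.sum_comm]
            congr 2
            exact Finset.sum_congr rfl fun s'' _ => (Finset.mul_sum _ _ _).symm
    have e2 : ∀ s'', ∑ s, q s'' s * f s = ∑ a, π s'' a * ∑ s', P s'' a s' * f s' := by
      intro s''
      simp only [hq]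
      rw [show (∑ s, (∑ a, π s'' a * P s'' a s) * f s) = ∑ s, ∑ a, π s'' a * P s'' a s * f s from Finset.sum_congr rfl fun s _ => Finset.sum_mul _ _ _]
      rw [Finset.sum_comm]
      refine Finset.sum_congr rfl fun a _ => ?_
      rw [Finset.mul_sum]
      exact Finset.sum_congr rfl fun s _ => by ring
    have e3 : γ * ∑ s'', dvis s'' * ∑ s, q s'' s * f s = ∑ s'', dvis s'' * (f s'' - u s'') := by
      rw [Finset.mul_sum]
      refine Finset.sum_congr rfl fun s'' _ => ?_
      rw [e2 s'', ← hfu s'']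
      ring
    rw [e3] at e1
    have e4 : ∑ s'', dvis s'' * (f s'' - u s'') = ∑ s, dvis s * f s - ∑ s, dvis s * u s := by
      rw [← Finset.sum_sub_distrib]
      exact Finset.sum_congr rfl fun s _ => by ring
    rw [e4] at e1
    linarith
  -- Step E: pointwise bound on u
  have hub : ∀ s, u s ≤ δ s + (2 * γ * εC / (1 - γ)) * ((1 / 2) * ∑ a, |π' s a - π s a|) := by
    intro s
    simp only [hu]
    have hEb : ∑ a, (π' s a - π s a) * ∑ s', P s a s' * f s' ≤ (∑ a, |π' s a - π s a|) * M := by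
      rw [Finset.sum_mul]
      refine Finset.sum_le_sum fun a _ => ?_
      calc (π' s a - π s a) * ∑ s', P s a s' * f s'
          ≤ |(π' s a - π s a) * ∑ s', P s a s' * f s'| := le_abs_self _
        _ = |π' s a - π s a| * |∑ s', P s a s' * f s'| := abs_mul _ _
        _ ≤ |π' s a - π s a| * M := mul_le_mul_of_nonneg_left (hPfM s a) (abs_nonneg _)
    have habs_nn : 0 ≤ ∑ a, |π' s a - π s a| := Finset.sum_nonneg fun a _ => abs_nonneg _
    have h5 : γ * ∑ a, (π' s a - π s a) * ∑ s', P s a s' * f s'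
        ≤ γ * ((∑ a, |π' s a - π s a|) * (εC / (1 - γ))) := by
      refine mul_le_mul_of_nonneg_left (le_trans hEb ?_) hγ0
      exact mul_le_mul_of_nonneg_left hMbound habs_nn
    have h6 : γ * ((∑ a, |π' s a - π s a|) * (εC / (1 - γ)))
        = (2 * γ * εC / (1 - γ)) * ((1 / 2) * ∑ a, |π' s a - π s a|) := by
      field_simp
    linarith [h5, h6.symm.le]
  -- Conclusion
  have hJ : JC' - JC = ∑ s, ρ s * f s := by
    rw [hJC, hJC', ← Finset.sum_sub_distrib]
    exact Finset.sum_congr rfl fun s _ => by simp only [hf]; ring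
  rw [hJ]
  have hfin : ∑ s, dvis s * u s ≤ ∑ s, dvis s *
      (δ s + (2 * γ * εC / (1 - γ)) * ((1 / 2) * ∑ a, |π' s a - π s a|)) :=
    Finset.sum_le_sum fun s _ => mul_le_mul_of_nonneg_left (hub s) (hdnn s)
  have : ∑ s, ρ s * f s = (1 / (1 - γ)) * ∑ s, dvis s * u s := by
    rw [← hkey]; field_simp
  rw [this]
  exact mul_le_mul_of_nonneg_left hfin (by positivity)
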